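/- arXiv:1511.07633 — 2 statements merged into one kernel-verified Lean document; each statement's English description precedes it below -/
import Mathlib

section
/- For every real number s ≥ 2, the largest real root γ_s of the polynomial Λ_s(t) = t³/6 − s(t − 1) satisfies √(6s) − 1 < γ_s < √(6s). -/
/-- For s ≥ 2, the largest real root γ_s of Λ_s(t) = t³/6 − s(t−1) satisfies
√(6s) − 1 < γ_s < √(6s). -/
theorem stmt_5 (s : ℝ) (hs : 2 ≤ s) (γ : ℝ)
    (hγ : IsGreatest {t : ℝ | t ^ 3 / 6 - s * (t - 1) = 0} γ) :
    Real.sqrt (6 * s) - 1 < γ ∧ γ < Real.sqrt (6 * s) := by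
  obtain ⟨hroot, hub⟩ := hγ
  have hroot : γ ^ 3 / 6 - s * (γ - 1) = 0 := hroot
  set a := Real.sqrt (6 * s) with ha
  have hs6 : (0:ℝ) ≤ 6 * s := by linarith
  have ha2 : a ^ 2 = 6 * s := Real.sq_sqrt hs6
  have ha_nonneg : 0 ≤ a := Real.sqrt_nonneg _
  have ha_ge : 3 ≤ a := by nlinarith
  have ha_le : a ≤ 2 * s := by nlinarith
  -- upper bound
  have hupper : γ < a := by
    by_contra h
    push_neg at h
    nlinarith [mul_nonneg (mul_nonneg (by linarith : (0:ℝ) ≤ γ) (by linarith : (0:ℝ) ≤ γ - a)) (by linarith : (0:ℝ) ≤ γ + a)]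
  refine ⟨?_, hupper⟩
  -- lower bound via IVT
  have hcont : ContinuousOn (fun t : ℝ => t ^ 3 / 6 - s * (t - 1)) (Set.Icc (a-1) a) := by
    fun_prop
  have hfa : (fun t : ℝ => t ^ 3 / 6 - s * (t - 1)) a = s := by
    simp only
    have h3 : a ^ 3 = 6 * s * a := by nlinarith
    field_simp
    nlinarith
  have hfa1 : (fun t : ℝ => t ^ 3 / 6 - s * (t - 1)) (a - 1) < 0 := by
    simp only
    nlinarith
  have hsub := intermediate_value_Ioo (by linarith : a - 1 ≤ a) hcont
  have h0mem : (0:ℝ) ∈ Set.Ioo ((fun t : ℝ => t ^ 3 / 6 - s * (t - 1)) (a-1))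
      ((fun t : ℝ => t ^ 3 / 6 - s * (t - 1)) a) := by
    rw [hfa]
    exact ⟨hfa1, by linarith⟩
  obtain ⟨x, hx, hxroot⟩ := hsub h0mem
  have : x ≤ γ := hub hxroot
  linarith [hx.1]
end

section
/- Fix d ∈ ℕ and let (p_m) be a sequence of real polynomial functions, each of degree at most d, converging pointwise on ℝ to a function f. Then f is a polynomial function of degree at most d, and the derivatives p_m' converge pointwise on ℝ to f'. -/
open Filter

open Polynomial Finset in
/-- A pointwise limit of real polynomial functions of degree ≤ d is a polynomial
function of degree ≤ d, and the derivatives converge pointwise to the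
derivative of the limit. -/
theorem stmt_14 (d : ℕ) (p : ℕ → Polynomial ℝ)
    (hdeg : ∀ m, (p m).degree ≤ d) (f : ℝ → ℝ)
    (hconv : ∀ x : ℝ, Tendsto (fun m => (p m).eval x) atTop (nhds (f x))) :
    (∃ q : Polynomial ℝ, q.degree ≤ d ∧ ∀ x : ℝ, f x = q.eval x) ∧
    ∀ x : ℝ, Tendsto (fun m => ((p m).derivative).eval x) atTop
      (nhds (deriv f x)) := by
  set s : Finset ℕ := Finset.range (d + 1) with hs
  set v : ℕ → ℝ := fun n => (n : ℝ) with hv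
  have hvs : Set.InjOn v s := fun a _ b _ h => Nat.cast_injective h
  have hkey : ∀ m, p m = Lagrange.interpolate s v fun i => (p m).eval (v i) := by
    intro m
    apply Lagrange.eq_interpolate hvs
    rw [hs, Finset.card_range]
    exact lt_of_le_of_lt (hdeg m) (by exact_mod_cast Nat.lt_succ_self d)
  set q : Polynomial ℝ := Lagrange.interpolate s v fun i => f (v i) with hq
  have hqdeg : q.degree ≤ d := by
    have := Lagrange.degree_interpolate_lt (fun i => f (v i)) hvs
    rw [hs, Finset.card_range] at this
    exact Order.lt_succ_iff.mp (by exact_mod_cast this)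
  have heval : ∀ x : ℝ, Tendsto (fun m => (p m).eval x) atTop (nhds (q.eval x)) := by
    intro x
    have : ∀ m, (p m).eval x = ∑ i ∈ s, (p m).eval (v i) * (Lagrange.basis s v i).eval x := by
      intro m
      conv_lhs => rw [hkey m]
      simp [Lagrange.interpolate_apply, eval_finset_sum]
    simp_rw [this]
    have : q.eval x = ∑ i ∈ s, f (v i) * (Lagrange.basis s v i).eval x := by
      simp [hq, Lagrange.interpolate_apply, eval_finset_sum]
    rw [this]
    exact tendsto_finset_sum _ fun i _ => (hconv (v i)).mul_const _
  have hfq : ∀ x : ℝ, f x = q.eval x := fun x =>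
    tendsto_nhds_unique (hconv x) (heval x)
  refine ⟨⟨q, hqdeg, hfq⟩, ?_⟩
  intro x
  have hderiv : deriv f x = q.derivative.eval x := by
    have : f = fun y => q.eval y := funext hfq
    rw [this, Polynomial.deriv]
  rw [hderiv]
  have : ∀ m, (p m).derivative.eval x
      = ∑ i ∈ s, (p m).eval (v i) * (Lagrange.basis s v i).derivative.eval x := by
    intro m
    conv_lhs => rw [hkey m]
    simp [Lagrange.interpolate_apply, derivative_sum, eval_finset_sum]
  simp_rw [this]
  have : q.derivative.eval x = ∑ i ∈ s, f (v i) * (Lagrange.basis s v i).derivative.eval x := by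
    simp [hq, Lagrange.interpolate_apply, derivative_sum, eval_finset_sum]
  rw [this]
  exact tendsto_finset_sum _ fun i _ => (hconv (v i)).mul_const _
end
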